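/- If X is a Hausdorff topological space, Y is a metrisable σ-locally compact space, and f : X → Y has a closed graph, then there exists a function f̂ : X → [0,∞) with a closed graph such that D(f) = D(f̂) and the graph of f̂ is homeomorphic to the graph of f. -/

import Mathlib

open Filter Set Topology

/-- Closed graph + values eventually in a compact set ⇒ convergence to `f x`. -/
lemma tendsto_of_closedGraph_of_compact
    {X Y : Type*} [TopologicalSpace X] [TopologicalSpace Y]
    {f : X → Y} (hf : IsClosed {p : X × Y | p.2 = f p.1})
    {l : Filter X} {x : X} (hl : l ≤ 𝓝 x)
    {K : Set Y} (hK : IsCompact K) (hfK : ∀ᶠ z in l, f z ∈ K) :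
    Filter.Tendsto f l (𝓝 (f x)) := by
  rw [tendsto_nhds]
  by_contra hcon
  push_neg at hcon
  obtain ⟨V, hVopen, hfxV, hnV⟩ := hcon
  set l' : Filter X := l ⊓ 𝓟 {z | f z ∉ V} with hl'def
  haveI hl'ne : l'.NeBot := by
    rw [neBot_iff]
    intro hbot
    apply hnV
    have := Filter.inf_principal_eq_bot.1 hbot
    simp only [Set.compl_setOf, not_not] at this
    exact this
  have hmem : K ∩ Vᶜ ∈ Filter.map f l' := by
    have h1 : ∀ᶠ z in l', f z ∈ K := (hfK.filter_mono inf_le_left)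
    have h2 : ∀ᶠ z in l', f z ∉ V := by
      rw [hl'def, eventually_inf_principal]
      exact Filter.Eventually.of_forall fun z hz => hz
    exact (h1.and h2)
  have hcpt : IsCompact (K ∩ Vᶜ) := hK.inter_right hVopen.isClosed_compl
  obtain ⟨y, hyKV, hy⟩ :=
    hcpt (le_principal_iff.2 hmem)
  -- the pushforward filter on the product
  set G : Filter (X × Y) := Filter.map (fun z => (z, f z)) l' with hGdef
  have hGgraph : G ≤ 𝓟 {p : X × Y | p.2 = f p.1} := by
    rw [le_principal_iff, hGdef, Filter.mem_map]
    exact Filter.univ_mem' fun z => rfl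
  have hGfst : Filter.map Prod.fst G = l' := by
    rw [hGdef, Filter.map_map]; exact Filter.map_id
  have hGfst' : G ≤ Filter.comap Prod.fst (𝓝 x) := by
    rw [← Filter.map_le_iff_le_comap, hGfst]
    exact le_trans inf_le_left hl
  have hGsnd : Filter.map Prod.snd G = Filter.map f l' := by
    rw [hGdef, Filter.map_map]; rfl
  have hBG : (Filter.comap Prod.snd (𝓝 y) ⊓ G).NeBot := by
    apply Filter.NeBot.of_map (m := Prod.snd)
    rw [inf_comm, Filter.push_pull, hGsnd]
    have : (𝓝 y ⊓ Filter.map f l').NeBot := hy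
    rwa [inf_comm] at this
  have hcluster : ClusterPt (x, y) G := by
    have hEq : 𝓝 (x, y) ⊓ G = Filter.comap Prod.snd (𝓝 y) ⊓ G := by
      rw [nhds_prod_eq, Filter.prod_eq_inf]
      refine le_antisymm (inf_le_inf_right G inf_le_right) ?_
      exact le_inf (le_inf (le_trans inf_le_right hGfst') inf_le_left) inf_le_right
    rw [ClusterPt, hEq]
    exact hBG
  have hmemcl : (x, y) ∈ closure {p : X × Y | p.2 = f p.1} :=
    mem_closure_iff_clusterPt.2 (hcluster.mono hGgraph)
  rw [hf.closure_eq] at hmemcl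
  have : y = f x := hmemcl
  exact hyKV.2 (this ▸ hfxV)

/-- A σ-compact locally compact metrizable space admits a nonnegative continuous
function with compact sublevel sets. -/
lemma exists_proper_real_function
    (Y : Type*) [TopologicalSpace Y] [TopologicalSpace.MetrizableSpace Y]
    [LocallyCompactSpace Y] [SigmaCompactSpace Y] :
    ∃ h : Y → ℝ, Continuous h ∧ (∀ y, 0 ≤ h y) ∧ ∀ c : ℝ, IsCompact {y | h y ≤ c} := by
  letI : MetricSpace Y := TopologicalSpace.metrizableSpaceMetric Y
  set K : CompactExhaustion Y := CompactExhaustion.choice Y with hKdef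
  have hex : ∀ n : ℕ, ∃ v : C(Y, ℝ), Set.EqOn v 0 (K (n + 1)) ∧
      Set.EqOn v 1 (interior (K (n + 2)))ᶜ ∧ ∀ y, v y ∈ Set.Icc (0 : ℝ) 1 := by
    intro n
    apply exists_continuous_zero_one_of_isClosed (K.isCompact (n + 1)).isClosed
      isOpen_interior.isClosed_compl
    rw [Set.disjoint_compl_right_iff_subset]
    exact K.subset_interior_succ (n + 1)
  choose v hv0 hv1 hv01 using hex
  -- vanishing of high terms
  have hvanish : ∀ (m : ℕ) (y : Y), y ∈ K m → ∀ n, m ≤ n + 1 → v n y = 0 := by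
    intro m y hy n hn
    exact hv0 n (K.subset hn hy)
  have hsummable : ∀ y : Y, Summable (fun n => v n y) := by
    intro y
    apply summable_of_ne_finset_zero (s := Finset.range (K.find y))
    intro n hn
    simp only [Finset.mem_range, not_lt] at hn
    exact hvanish (K.find y) y (K.mem_find y) n (le_trans hn (Nat.le_succ n))
  refine ⟨fun y => ∑' n, v n y, ?_, ?_, ?_⟩
  · -- continuity
    rw [continuous_iff_continuousAt]
    intro y
    obtain ⟨m, hm⟩ := K.exists_mem_nhds y
    have heq : ∀ z ∈ K m, (∑' n, v n z) = ∑ n ∈ Finset.range m, v n z := by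
      intro z hz
      apply tsum_eq_sum
      intro n hn
      simp only [Finset.mem_range, not_lt] at hn
      exact hvanish m z hz n (le_trans hn (Nat.le_succ n))
    have hcongr : (fun z => ∑' n, v n z) =ᶠ[𝓝 y]
        fun z => ∑ n ∈ Finset.range m, v n z := by
      filter_upwards [hm] with z hz using heq z hz
    apply ContinuousAt.congr _ hcongr.symm
    exact (continuous_finset_sum (Finset.range m) fun n _ => (v n).continuous).continuousAt
  · intro y
    exact tsum_nonneg fun n => (hv01 n y).1
  · intro c
    obtain ⟨N, hN⟩ := exists_nat_ge c
    have hsub : {y : Y | (∑' n, v n y) ≤ c} ⊆ K (N + 2) := by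
      intro y hy
      by_contra hyK
      have hones : ∀ n ≤ N, v n y = 1 := by
        intro n hn
        apply hv1 n
        intro hmem
        exact hyK (K.subset (by omega) (interior_subset hmem))
      have hlow : (N : ℝ) + 1 ≤ ∑' n, v n y := by
        have : ∑ n ∈ Finset.range (N + 1), v n y ≤ ∑' n, v n y :=
          Summable.sum_le_tsum _ (fun n _ => (hv01 n y).1) (hsummable y)
        have hsum : ∑ n ∈ Finset.range (N + 1), v n y = (N : ℝ) + 1 := by
          rw [Finset.sum_congr rfl fun n hn =>
            hones n (Nat.lt_succ_iff.1 (Finset.mem_range.1 hn))]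
          simp
        linarith
      have : (∑' n, v n y : ℝ) ≤ c := hy
      linarith
    have hclosed : IsClosed {y : Y | (∑' n, v n y) ≤ c} := by
      have hcont : Continuous fun y => ∑' n, v n y := by
        rw [continuous_iff_continuousAt]
        intro y
        obtain ⟨m, hm⟩ := K.exists_mem_nhds y
        have heq : ∀ z ∈ K m, (∑' n, v n z) = ∑ n ∈ Finset.range m, v n z := by
          intro z hz
          apply tsum_eq_sum
          intro n hn
          simp only [Finset.mem_range, not_lt] at hn
          exact hvanish m z hz n (le_trans hn (Nat.le_succ n))
        have hcongr : (fun z => ∑' n, v n z) =ᶠ[𝓝 y]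
            fun z => ∑ n ∈ Finset.range m, v n z := by
          filter_upwards [hm] with z hz using heq z hz
        apply ContinuousAt.congr _ hcongr.symm
        exact (continuous_finset_sum (Finset.range m) fun n _ => (v n).continuous).continuousAt
      exact isClosed_le hcont continuous_const
    exact (K.isCompact (N + 2)).of_isClosed_subset hclosed hsub

theorem codomain_reduction_to_halfLine
    {X Y : Type*} [TopologicalSpace X] [T2Space X]
    [TopologicalSpace Y] [TopologicalSpace.MetrizableSpace Y]
    [LocallyCompactSpace Y] [SigmaCompactSpace Y]
    (f : X → Y) (hf : IsClosed {p : X × Y | p.2 = f p.1}) :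
    ∃ g : X → ℝ, (∀ x, 0 ≤ g x) ∧
      IsClosed {p : X × ℝ | p.2 = g p.1} ∧
      {x : X | ¬ ContinuousAt f x} = {x : X | ¬ ContinuousAt g x} ∧
      Nonempty (↥{p : X × Y | p.2 = f p.1} ≃ₜ ↥{p : X × ℝ | p.2 = g p.1}) := by
  obtain ⟨h, hcont, hnn, hKc⟩ := exists_proper_real_function Y
  refine ⟨fun x => h (f x), fun x => hnn (f x), ?_, ?_, ?_⟩
  · -- closed graph
    rw [isClosed_iff_clusterPt]
    rintro ⟨x, r⟩ hp
    haveI hne : (𝓝 (x, r) ⊓ 𝓟 {p : X × ℝ | p.2 = h (f p.1)}).NeBot := hp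
    set l₀ := 𝓝 (x, r) ⊓ 𝓟 {p : X × ℝ | p.2 = h (f p.1)} with hl₀
    have hsnd : Tendsto (fun p : X × ℝ => p.2) l₀ (𝓝 r) :=
      ((continuous_snd.tendsto (x, r)).mono_left inf_le_left)
    have hev : ∀ᶠ p in l₀, p.2 = h (f p.1) := by
      rw [hl₀, eventually_inf_principal]
      exact Filter.Eventually.of_forall fun p hp => hp
    have hev2 : ∀ᶠ p in l₀, p.2 ≤ r + 1 := hsnd.eventually (eventually_le_nhds (lt_add_one r))
    have hl : Filter.map Prod.fst l₀ ≤ 𝓝 x :=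
      ((continuous_fst.tendsto (x, r)).mono_left inf_le_left)
    have hfK : ∀ᶠ z in Filter.map Prod.fst l₀, f z ∈ {y | h y ≤ r + 1} := by
      rw [eventually_map]
      filter_upwards [hev, hev2] with p h1 h2
      simpa [← h1] using h2
    have htf := tendsto_of_closedGraph_of_compact hf hl (hKc (r + 1)) hfK
    have h1 : Tendsto (fun p : X × ℝ => h (f p.1)) l₀ (𝓝 (h (f x))) := by
      have := (hcont.tendsto (f x)).comp htf
      rwa [Filter.tendsto_map'_iff] at this
    have h2 : Tendsto (fun p : X × ℝ => h (f p.1)) l₀ (𝓝 r) := hsnd.congr' hev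
    exact tendsto_nhds_unique h2 h1
  · -- same discontinuity sets
    have hfg : ∀ x, ContinuousAt f x ↔ ContinuousAt (fun x => h (f x)) x := by
      intro x
      constructor
      · intro hx
        exact (hcont.continuousAt).comp hx
      · intro hx
        have hev : ∀ᶠ z in 𝓝 x, f z ∈ {y | h y ≤ h (f x) + 1} :=
          hx.eventually (eventually_le_nhds (lt_add_one _))
        exact tendsto_of_closedGraph_of_compact hf le_rfl (hKc (h (f x) + 1)) hev
    exact Set.ext fun x => not_congr (hfg x)
  · -- homeomorphism of graphs
    have hFcont : Continuous fun p : {p : X × ℝ | p.2 = h (f p.1)} => f p.val.1 := by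
      rw [continuous_iff_continuousAt]
      intro p₀
      have hπ : Tendsto (fun p : {p : X × ℝ | p.2 = h (f p.1)} => p.val.1) (𝓝 p₀)
          (𝓝 p₀.val.1) := (continuous_fst.comp continuous_subtype_val).continuousAt
      have hsnd : Tendsto (fun p : {p : X × ℝ | p.2 = h (f p.1)} => p.val.2) (𝓝 p₀)
          (𝓝 p₀.val.2) := (continuous_snd.comp continuous_subtype_val).continuousAt
      have hev : ∀ᶠ p in 𝓝 p₀,
          f ((fun p : {p : X × ℝ | p.2 = h (f p.1)} => p.val.1) p) ∈
            {y | h y ≤ p₀.val.2 + 1} := by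
        filter_upwards [hsnd.eventually (eventually_le_nhds (lt_add_one p₀.val.2))] with p hp
        have := p.prop
        simp only [Set.mem_setOf_eq] at this ⊢
        rw [← this]
        exact hp
      have hl : Filter.map (fun p : {p : X × ℝ | p.2 = h (f p.1)} => p.val.1) (𝓝 p₀) ≤
          𝓝 p₀.val.1 := hπ
      have := tendsto_of_closedGraph_of_compact hf hl (hKc (p₀.val.2 + 1))
        (by rwa [eventually_map])
      rw [Filter.tendsto_map'_iff] at this
      exact this
    refine ⟨⟨⟨fun p => ⟨(p.val.1, h (f p.val.1)), rfl⟩,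
        fun p => ⟨(p.val.1, f p.val.1), rfl⟩, ?_, ?_⟩, ?_, ?_⟩⟩
    · rintro ⟨⟨x, y⟩, hy⟩
      have : y = f x := hy
      exact Subtype.ext (Prod.ext rfl this.symm)
    · rintro ⟨⟨x, r⟩, hr⟩
      have : r = h (f x) := hr
      exact Subtype.ext (Prod.ext rfl this.symm)
    · apply Continuous.subtype_mk
      have hc : Continuous fun p : {p : X × Y | p.2 = f p.1} =>
          ((p.val.1, h p.val.2) : X × ℝ) :=
        (continuous_fst.comp continuous_subtype_val).prodMk
          (hcont.comp (continuous_snd.comp continuous_subtype_val))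
      apply hc.congr
      intro p
      have : p.val.2 = f p.val.1 := p.prop
      rw [this]
    · exact Continuous.subtype_mk
        (((continuous_fst.comp continuous_subtype_val)).prodMk hFcont) _
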